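/- Let k ≥ 3 and let D be a unitrivalent diagram on k colors having a connected component C of degree k−1 (a tree with exactly one univalent vertex of each of the k colors), and suppose that the univalent vertices of C colored i and j are both adjacent to a common trivalent vertex of C. Then (1 + m(D;i,j))·[D] = 0 in B^{hl}(k), where [D] denotes the class of D in B^{hl}(k). -/

import Mathlib

/-!
Unitrivalent diagrams on `k` colors, in half-edge (combinatorial map) form.

A diagram is given by a finite set `H` of half-edges, a fixed-point-free
involution `sig` pairing the two half-edges of each edge, and a permutation
`tau` with `tau ^ 3 = id` whose orbits are the vertices: fixed points are
univalent vertices (carrying a color in `Fin k`) and 3-element orbits are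
trivalent vertices, the cyclic ordering of whose incident edges is given by
`tau`.  Every connected component is required to contain a univalent vertex.
-/
structure Diagram (k : ℕ) where
  H : Type
  fin : Fintype H
  dec : DecidableEq H
  sig : H → H
  sig_invol : ∀ h, sig (sig h) = h
  sig_ne : ∀ h, sig h ≠ h
  tau : H → H
  tau_cube : ∀ h, tau (tau (tau h)) = h
  color : H → Fin k
  conn : ∀ h, ∃ h', Relation.ReflTransGen (fun a b => b = sig a ∨ b = tau a) h h' ∧ tau h' = h'

attribute [instance] Diagram.fin Diagram.dec

namespace Diagram

variable {k : ℕ}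

/-- `a` and `b` are half-edges of the same connected component. -/
def Reach (D : Diagram k) (a b : D.H) : Prop :=
  Relation.ReflTransGen (fun x y => y = D.sig x ∨ y = D.tau x) a b

/-- The set of half-edges of the connected component of `h0`. -/
def compSet (D : Diagram k) (h0 : D.H) : Set D.H := {x | D.Reach h0 x}

/-- The set of univalent vertices (= `tau`-fixed half-edges) of the component of `h0`. -/
def univIn (D : Diagram k) (h0 : D.H) : Set D.H := {x | D.Reach h0 x ∧ D.tau x = x}

/-- The component of `h0` is a tree.  (Euler-count criterion: a connected component of a
graph all of whose vertices have degree 1 or 3 and with `u` univalent vertices is a tree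
iff it has exactly `4 * u - 6` half-edges.) -/
def IsTreeAt (D : Diagram k) (h0 : D.H) : Prop :=
  (D.compSet h0).ncard + 6 = 4 * (D.univIn h0).ncard

/-- The component of `h0` is boring: it has two univalent vertices of the same color,
or it contains a cycle (i.e. is not a tree). -/
def IsBoringAt (D : Diagram k) (h0 : D.H) : Prop :=
  (∃ x ∈ D.univIn h0, ∃ y ∈ D.univIn h0, x ≠ y ∧ D.color x = D.color y) ∨ ¬ D.IsTreeAt h0

def HasBoring (D : Diagram k) : Prop := ∃ h0, D.IsBoringAt h0

/-- `m D i j` (for `i ≠ j`) is the number of connected components of `D` consisting of a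
single edge with one endpoint colored `i` and the other colored `j`; each such component
is counted via its `i`-colored end. -/
noncomputable def m (D : Diagram k) (i j : Fin k) : ℕ :=
  {x : D.H | D.tau x = x ∧ D.tau (D.sig x) = D.sig x ∧ D.color x = i ∧
    D.color (D.sig x) = j}.ncard

/-- Number of vertices of the component of `h0`. -/
noncomputable def vertAt (D : Diagram k) (h0 : D.H) : ℕ :=
  (D.univIn h0).ncard + ((D.compSet h0).ncard - (D.univIn h0).ncard) / 3

/-- Degree (half the number of vertices) of the component of `h0`. -/
noncomputable def degAt (D : Diagram k) (h0 : D.H) : ℕ := D.vertAt h0 / 2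

/-- Total number of vertices of the diagram. -/
noncomputable def numVert (D : Diagram k) : ℕ :=
  Nat.card {h : D.H // D.tau h = h} +
    (Nat.card D.H - Nat.card {h : D.H // D.tau h = h}) / 3

/-- Degree of the diagram: half its total number of vertices. -/
noncomputable def deg (D : Diagram k) : ℕ := D.numVert / 2

/-- Isomorphism of unitrivalent diagrams: a bijection of half-edges commuting with the
edge involution and the vertex rotation, and preserving the colors of univalent vertices. -/
def Iso (D E : Diagram k) : Prop :=
  ∃ e : D.H ≃ E.H,
    (∀ h, e (D.sig h) = E.sig (e h)) ∧
    (∀ h, e (D.tau h) = E.tau (e h)) ∧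
    (∀ h, D.tau h = h → E.color (e h) = D.color h)

end Diagram

/-- The free real vector space on (the type of) unitrivalent diagrams.  Together with the
relation `IsoRel` identifying isomorphic diagrams, quotienting by its span realizes the
vector space spanned by isomorphism classes of diagrams. -/
abbrev FreeD (k : ℕ) := Diagram k →₀ ℝ

noncomputable def fd {k : ℕ} (D : Diagram k) : FreeD k := Finsupp.single D 1

/-- Identify isomorphic diagrams. -/
def IsoRel (k : ℕ) : Set (FreeD k) :=
  {x | ∃ D E : Diagram k, Diagram.Iso D E ∧ x = fd D - fd E}

/-- The antisymmetry relation: reversing the cyclic ordering at one trivalent vertex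
(the `tau`-orbit of `v`) negates the diagram, i.e. `D + D' = 0`. -/
def ASRel (k : ℕ) : Set (FreeD k) :=
  {x | ∃ (D D' : Diagram k) (e : D.H ≃ D'.H) (v : D.H),
      D.tau v ≠ v ∧
      (∀ h, e (D.sig h) = D'.sig (e h)) ∧
      (∀ h, D.tau h = h → D'.color (e h) = D.color h) ∧
      (∀ h, (h = v ∨ h = D.tau v ∨ h = D.tau (D.tau v)) →
        D'.tau (e h) = e (D.tau (D.tau h))) ∧
      (∀ h, ¬(h = v ∨ h = D.tau v ∨ h = D.tau (D.tau v)) →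
        D'.tau (e h) = e (D.tau h)) ∧
      x = fd D + fd D'}

/-- The IHX relation `I - H + X = 0`.  In `DI` the edge `{a, b}` joins the trivalent
vertices `(a, h2, h1)` and `(b, h3, h4)` (cyclic orderings as recorded by `tau`);
`DH` and `DX` are the same diagram except that the two trivalent vertices are rewired
as `(a, h1, h3), (b, h4, h2)` resp. `(a, h1, h4), (b, h3, h2)`.  (With counterclockwise
cyclic orderings this is the standard I, H and X configurations on the four external
legs attached to `h1, h2, h3, h4`.) -/
def IHXRel (k : ℕ) : Set (FreeD k) :=
  {x | ∃ (DI DH DX : Diagram k) (eH : DI.H ≃ DH.H) (eX : DI.H ≃ DX.H)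
      (a b h1 h2 h3 h4 : DI.H),
      DI.sig a = b ∧
      ([a, b, h1, h2, h3, h4] : List DI.H).Nodup ∧
      DI.tau a = h2 ∧ DI.tau h2 = h1 ∧ DI.tau h1 = a ∧
      DI.tau b = h3 ∧ DI.tau h3 = h4 ∧ DI.tau h4 = b ∧
      (∀ h, eH (DI.sig h) = DH.sig (eH h)) ∧
      (∀ h, DI.tau h = h → DH.color (eH h) = DI.color h) ∧
      (∀ h, h ∉ ([a, b, h1, h2, h3, h4] : List DI.H) → eH (DI.tau h) = DH.tau (eH h)) ∧
      DH.tau (eH a) = eH h1 ∧ DH.tau (eH h1) = eH h3 ∧ DH.tau (eH h3) = eH a ∧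
      DH.tau (eH b) = eH h4 ∧ DH.tau (eH h4) = eH h2 ∧ DH.tau (eH h2) = eH b ∧
      (∀ h, eX (DI.sig h) = DX.sig (eX h)) ∧
      (∀ h, DI.tau h = h → DX.color (eX h) = DI.color h) ∧
      (∀ h, h ∉ ([a, b, h1, h2, h3, h4] : List DI.H) → eX (DI.tau h) = DX.tau (eX h)) ∧
      DX.tau (eX a) = eX h1 ∧ DX.tau (eX h1) = eX h4 ∧ DX.tau (eX h4) = eX a ∧
      DX.tau (eX b) = eX h3 ∧ DX.tau (eX h3) = eX h2 ∧ DX.tau (eX h2) = eX b ∧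
      x = fd DI - fd DH + fd DX}

/-- Diagrams with a boring component are zero. -/
def BoringRel (k : ℕ) : Set (FreeD k) :=
  {x | ∃ D : Diagram k, D.HasBoring ∧ x = fd D}

/-- A rooted tree: a unitrivalent graph which is a tree (Euler-count criterion), with a
distinguished (uncolored) univalent vertex `root`; the other univalent vertices carry
colors.  Used to form the link relations. -/
structure GraftTree (k : ℕ) where
  H : Type
  fin : Fintype H
  dec : DecidableEq H
  sig : H → H
  sig_invol : ∀ h, sig (sig h) = h
  sig_ne : ∀ h, sig h ≠ h
  tau : H → H
  tau_cube : ∀ h, tau (tau (tau h)) = h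
  root : H
  root_fix : tau root = root
  color : H → Fin k
  conn : ∀ h, Relation.ReflTransGen (fun a b => b = sig a ∨ b = tau a) root h
  tree : Nat.card H + 6 = 4 * Nat.card {h : H // tau h = h}

attribute [instance] GraftTree.fin GraftTree.dec

/-- The edge involution of the diagram obtained by grafting the rooted tree `X` at the
univalent vertex `u` of `E`: the edge of `E` at `u` is subdivided by a new trivalent
vertex `{root, false, true}`, whose half-edge `false` pairs with `u`, whose half-edge
`true` pairs with the old partner `E.sig u`, and whose half-edge `root` is paired
inside `X` (so the root edge of `X` is attached at the new vertex). -/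
def graftSig {k : ℕ} (E : Diagram k) (u : E.H) (X : GraftTree k) :
    E.H ⊕ (X.H ⊕ Bool) → E.H ⊕ (X.H ⊕ Bool)
  | Sum.inl h =>
    if h = u then Sum.inr (Sum.inr false)
    else if h = E.sig u then Sum.inr (Sum.inr true)
    else Sum.inl (E.sig h)
  | Sum.inr (Sum.inl x) => Sum.inr (Sum.inl (X.sig x))
  | Sum.inr (Sum.inr false) => Sum.inl u
  | Sum.inr (Sum.inr true) => Sum.inl (E.sig u)

/-- The vertex rotation of the grafted diagram: the root of `X` is merged into the new
trivalent vertex `(root, false, true)`; everything else is unchanged. -/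
def graftTau {k : ℕ} (E : Diagram k) (_u : E.H) (X : GraftTree k) :
    E.H ⊕ (X.H ⊕ Bool) → E.H ⊕ (X.H ⊕ Bool)
  | Sum.inl h => Sum.inl (E.tau h)
  | Sum.inr (Sum.inl x) =>
    if x = X.root then Sum.inr (Sum.inr false) else Sum.inr (Sum.inl (X.tau x))
  | Sum.inr (Sum.inr false) => Sum.inr (Sum.inr true)
  | Sum.inr (Sum.inr true) => Sum.inr (Sum.inl X.root)

def graftColor {k : ℕ} (E : Diagram k) (u : E.H) (X : GraftTree k) :
    E.H ⊕ (X.H ⊕ Bool) → Fin k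
  | Sum.inl h => E.color h
  | Sum.inr (Sum.inl x) => X.color x
  | Sum.inr (Sum.inr _) => E.color u

/-- `G` is (isomorphic to) the diagram obtained by grafting `X` at `u`. -/
def IsGraft {k : ℕ} (E : Diagram k) (u : E.H) (X : GraftTree k) (G : Diagram k) : Prop :=
  ∃ e : (E.H ⊕ (X.H ⊕ Bool)) ≃ G.H,
    (∀ p, e (graftSig E u X p) = G.sig (e p)) ∧
    (∀ p, e (graftTau E u X p) = G.tau (e p)) ∧
    (∀ p, graftTau E u X p = p → G.color (e p) = graftColor E u X p)

/-- The link relations (*): for every diagram `E`, color `i` and rooted tree `X`, the sum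
over all univalent vertices `u` of `E` of color `i` of the diagrams obtained by grafting
`X` at `u` is zero. -/
def LinkRel (k : ℕ) : Set (FreeD k) :=
  {x | ∃ (E : Diagram k) (i : Fin k) (X : GraftTree k) (g : E.H → Diagram k),
      (∀ u, E.tau u = u → E.color u = i → IsGraft E u X (g u)) ∧
      x = ∑ u ∈ Finset.univ.filter (fun u => E.tau u = u ∧ E.color u = i), fd (g u)}

/-- The relations defining `B^{hsl}(k)` (string links up to homotopy): isomorphism,
antisymmetry, IHX, and killing diagrams with boring components. -/
noncomputable def BhslRel (k : ℕ) : Submodule ℝ (FreeD k) :=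
  Submodule.span ℝ (IsoRel k ∪ ASRel k ∪ IHXRel k ∪ BoringRel k)

/-- The relations defining `B^{hl}(k)`: those of `B^{hsl}(k)` together with the link
relations (*). -/
noncomputable def BhlRel (k : ℕ) : Submodule ℝ (FreeD k) :=
  Submodule.span ℝ (IsoRel k ∪ ASRel k ∪ IHXRel k ∪ BoringRel k ∪ LinkRel k)

/-- The space `B^{hl}(k)` of unitrivalent diagrams for `k`-component links up to homotopy. -/
abbrev Bhl (k : ℕ) := FreeD k ⧸ BhlRel k

/-- The class of a diagram in `B^{hl}(k)`. -/
noncomputable def bhlClass {k : ℕ} (D : Diagram k) : Bhl k :=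
  Submodule.Quotient.mk (fd D)

set_option linter.unusedVariables false
set_option linter.unusedSectionVars false

section Aux

open Relation

variable {α : Type*}

/-- One backward step for the edge/vertex step relation. -/
lemma step_symm {s t : α → α} (hs : ∀ h, s (s h) = h) (ht : ∀ h, t (t (t h)) = h)
    {a b : α} (h : b = s a ∨ b = t a) :
    Relation.ReflTransGen (fun p q => q = s p ∨ q = t p) b a := by
  rcases h with rfl | rfl
  · exact ReflTransGen.single (Or.inl (hs a).symm)
  · refine ReflTransGen.tail (b := t (t a)) (ReflTransGen.single (Or.inr rfl)) ?_
    exact Or.inr (ht a).symm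

lemma rtg_symm {s t : α → α} (hs : ∀ h, s (s h) = h) (ht : ∀ h, t (t (t h)) = h)
    {a b : α} (h : Relation.ReflTransGen (fun p q => q = s p ∨ q = t p) a b) :
    Relation.ReflTransGen (fun p q => q = s p ∨ q = t p) b a := by
  induction h with
  | refl => exact ReflTransGen.refl
  | tail _ hbc ih => exact (step_symm hs ht hbc).trans ih

lemma cube_inj {t : α → α} (ht : ∀ h, t (t (t h)) = h) : Function.Injective t := by
  intro a b hab
  have h2 : t (t (t a)) = t (t (t b)) := by rw [hab]
  rw [ht a, ht b] at h2
  exact h2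

end Aux

namespace Diagram

variable {k : ℕ} {D : Diagram k}

lemma reach_refl (a : D.H) : D.Reach a a := Relation.ReflTransGen.refl

lemma reach_symm {a b : D.H} (h : D.Reach a b) : D.Reach b a :=
  rtg_symm D.sig_invol D.tau_cube h

lemma reach_trans {a b c : D.H} (h : D.Reach a b) (h' : D.Reach b c) : D.Reach a c :=
  Relation.ReflTransGen.trans h h'

lemma reach_sig (a : D.H) : D.Reach a (D.sig a) :=
  Relation.ReflTransGen.single (Or.inl rfl)

lemma reach_tau (a : D.H) : D.Reach a (D.tau a) :=
  Relation.ReflTransGen.single (Or.inr rfl)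

lemma tau_inj : Function.Injective D.tau := cube_inj D.tau_cube

lemma sig_inj : Function.Injective D.sig := Function.LeftInverse.injective D.sig_invol

lemma mem_comp_sig {h0 a : D.H} (ha : a ∈ D.compSet h0) : D.sig a ∈ D.compSet h0 :=
  Relation.ReflTransGen.tail ha (Or.inl rfl)

lemma mem_comp_tau {h0 a : D.H} (ha : a ∈ D.compSet h0) : D.tau a ∈ D.compSet h0 :=
  Relation.ReflTransGen.tail ha (Or.inr rfl)

lemma mem_comp_of_reach {h0 a b : D.H} (ha : a ∈ D.compSet h0) (h : D.Reach a b) :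
    b ∈ D.compSet h0 := reach_trans ha h

lemma reach_of_mem_comp {h0 a b : D.H} (ha : a ∈ D.compSet h0) (hb : b ∈ D.compSet h0) :
    D.Reach a b := reach_trans (reach_symm ha) hb

lemma sig_mem_comp_iff {h0 a : D.H} : D.sig a ∈ D.compSet h0 ↔ a ∈ D.compSet h0 := by
  constructor
  · intro h; have := mem_comp_sig h; rwa [D.sig_invol] at this
  · exact mem_comp_sig

lemma tau_mem_comp_iff {h0 a : D.H} : D.tau a ∈ D.compSet h0 ↔ a ∈ D.compSet h0 := by
  constructor
  · intro h
    have := mem_comp_tau (mem_comp_tau h)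
    rwa [D.tau_cube] at this
  · exact mem_comp_tau

/-- distinctness of a 3-orbit -/
lemma orbit_distinct {a : D.H} (hna : D.tau a ≠ a) :
    D.tau a ≠ a ∧ D.tau (D.tau a) ≠ a ∧ D.tau (D.tau a) ≠ D.tau a := by
  refine ⟨hna, ?_, ?_⟩
  · intro h
    have h3 := D.tau_cube a
    rw [h] at h3
    exact hna h3
  · intro h
    exact hna (tau_inj h)

lemma tau_fix_of_tau_tau_fix {a : D.H} (h : D.tau (D.tau a) = a) : D.tau a = a := by
  by_contra hna
  exact (orbit_distinct hna).2.1 h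

end Diagram

section Graft

variable {k : ℕ} (E : Diagram k) (u : E.H) (X : GraftTree k)

/-- Reachability in the grafted half-edge structure. -/
def GReach (p q : E.H ⊕ (X.H ⊕ Bool)) : Prop :=
  Relation.ReflTransGen
    (fun a b => b = graftSig E u X a ∨ b = graftTau E u X a) p q

lemma graftSig_invol (p) : graftSig E u X (graftSig E u X p) = p := by
  have hsu : E.sig u ≠ u := E.sig_ne u
  rcases p with h | x | b
  · by_cases h1 : h = u
    · subst h1; simp [graftSig]
    · by_cases h2 : h = E.sig u
      · subst h2; simp [graftSig, hsu]
      · have h3 : E.sig h ≠ u := fun hh => h2 (by rw [← hh, E.sig_invol])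
        have h4 : E.sig h ≠ E.sig u := fun hh => h1 (Diagram.sig_inj hh)
        simp [graftSig, h1, h2, h3, h4, E.sig_invol]
  · simp [graftSig, X.sig_invol]
  · rcases b with _ | _
    · simp [graftSig]
    · simp [graftSig, hsu, E.sig_invol]

lemma graftSig_ne (p) : graftSig E u X p ≠ p := by
  rcases p with h | x | b
  · by_cases h1 : h = u
    · subst h1; simp [graftSig]
    · by_cases h2 : h = E.sig u
      · subst h2; simp [graftSig, E.sig_ne u]
      · simp only [graftSig, if_neg h1, if_neg h2, ne_eq, Sum.inl.injEq]
        exact E.sig_ne h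
  · simp only [graftSig, ne_eq, Sum.inr.injEq, Sum.inl.injEq]
    exact X.sig_ne x
  · rcases b with _ | _ <;> simp [graftSig]

lemma graftTau_cube (p) : graftTau E u X (graftTau E u X (graftTau E u X p)) = p := by
  rcases p with h | x | b
  · simp [graftTau, E.tau_cube]
  · by_cases h1 : x = X.root
    · subst h1; simp [graftTau]
    · have h2 : X.tau x ≠ X.root := fun hh => h1 (cube_inj X.tau_cube (by rw [hh, X.root_fix]))
      have h3 : X.tau (X.tau x) ≠ X.root :=
        fun hh => h2 (cube_inj X.tau_cube (by rw [hh, X.root_fix]))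
      simp [graftTau, h1, h2, h3, X.tau_cube]
  · rcases b with _ | _ <;> simp [graftTau]

lemma greach_symm {p q} (h : GReach E u X p q) : GReach E u X q p :=
  rtg_symm (graftSig_invol E u X) (graftTau_cube E u X) h

lemma lift_reach_E {a b : E.H} (h : E.Reach a b) : GReach E u X (Sum.inl a) (Sum.inl b) := by
  induction h with
  | refl => exact Relation.ReflTransGen.refl
  | tail _ hbc ih =>
    refine ih.trans ?_
    rename_i b' c' _
    rcases hbc with rfl | rfl
    · by_cases h1 : b' = u
      · rw [h1]
        refine Relation.ReflTransGen.head (b := Sum.inr (Sum.inr false))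
          (Or.inl (by simp [graftSig])) ?_
        refine Relation.ReflTransGen.head (b := Sum.inr (Sum.inr true))
          (Or.inr (by simp [graftTau])) ?_
        exact Relation.ReflTransGen.single (Or.inl (by simp [graftSig]))
      · by_cases h2 : b' = E.sig u
        · rw [h2, E.sig_invol]
          refine Relation.ReflTransGen.head (b := Sum.inr (Sum.inr true))
            (Or.inl (by simp [graftSig, E.sig_ne u])) ?_
          refine Relation.ReflTransGen.head (b := Sum.inr (Sum.inl X.root))
            (Or.inr (by simp [graftTau])) ?_
          refine Relation.ReflTransGen.head (b := Sum.inr (Sum.inr false))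
            (Or.inr (by simp [graftTau])) ?_
          exact Relation.ReflTransGen.single (Or.inl (by simp [graftSig]))
        · exact Relation.ReflTransGen.single (Or.inl (by simp [graftSig, h1, h2]))
    · exact Relation.ReflTransGen.single (Or.inr (by simp [graftTau]))

lemma lift_reach_X {z : X.H} : GReach E u X (Sum.inr (Sum.inl X.root)) (Sum.inr (Sum.inl z)) := by
  have h := X.conn z
  induction h with
  | refl => exact Relation.ReflTransGen.refl
  | tail _ hbc ih =>
    refine ih.trans ?_
    rename_i b' c' _
    rcases hbc with rfl | rfl
    · exact Relation.ReflTransGen.single (Or.inl (by simp [graftSig]))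
    · by_cases h1 : b' = X.root
      · subst h1; rw [X.root_fix]
      · exact Relation.ReflTransGen.single (Or.inr (by simp [graftTau, h1]))

lemma greach_new_to_u : GReach E u X (Sum.inr (Sum.inr false)) (Sum.inl u) :=
  Relation.ReflTransGen.single (Or.inl (by simp [graftSig]))

lemma greach_root_to_u : GReach E u X (Sum.inr (Sum.inl X.root)) (Sum.inl u) :=
  Relation.ReflTransGen.head (b := Sum.inr (Sum.inr false))
    (Or.inr (by simp [graftTau])) (greach_new_to_u E u X)

lemma graft_conn (p) : ∃ p', GReach E u X p p' ∧ graftTau E u X p' = p' := by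
  have base : ∀ a : E.H, ∃ p', GReach E u X (Sum.inl a) p' ∧ graftTau E u X p' = p' := by
    intro a
    obtain ⟨h', hpath, hfix⟩ := E.conn a
    exact ⟨Sum.inl h', lift_reach_E E u X hpath, by simp [graftTau, hfix]⟩
  rcases p with h | z | b
  · exact base h
  · obtain ⟨p', hp, hfix⟩ := base u
    refine ⟨p', ?_, hfix⟩
    have h1 : GReach E u X (Sum.inr (Sum.inl z)) (Sum.inr (Sum.inl X.root)) :=
      greach_symm E u X (lift_reach_X E u X)
    exact (h1.trans (greach_root_to_u E u X)).trans hp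
  · obtain ⟨p', hp, hfix⟩ := base u
    refine ⟨p', ?_, hfix⟩
    rcases b with _ | _
    · exact (greach_new_to_u E u X).trans hp
    · refine Relation.ReflTransGen.head (b := Sum.inr (Sum.inl X.root))
        (Or.inr (by simp [graftTau])) ?_
      exact (greach_root_to_u E u X).trans hp

@[simp] lemma graftTau_inl (h : E.H) : graftTau E u X (Sum.inl h) = Sum.inl (E.tau h) := rfl
@[simp] lemma graftTau_false : graftTau E u X (Sum.inr (Sum.inr false)) = Sum.inr (Sum.inr true) := rfl
@[simp] lemma graftTau_true : graftTau E u X (Sum.inr (Sum.inr true)) = Sum.inr (Sum.inl X.root) := rfl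
lemma graftTau_root : graftTau E u X (Sum.inr (Sum.inl X.root)) = Sum.inr (Sum.inr false) := by
  simp [graftTau]
lemma graftTau_nroot {z : X.H} (hz : z ≠ X.root) :
    graftTau E u X (Sum.inr (Sum.inl z)) = Sum.inr (Sum.inl (X.tau z)) := by
  simp [graftTau, hz]
lemma graftSig_inl_u : graftSig E u X (Sum.inl u) = Sum.inr (Sum.inr false) := by
  simp [graftSig]
lemma graftSig_inl_su : graftSig E u X (Sum.inl (E.sig u)) = Sum.inr (Sum.inr true) := by
  simp [graftSig, E.sig_ne u]
lemma graftSig_inl_other {h : E.H} (h1 : h ≠ u) (h2 : h ≠ E.sig u) :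
    graftSig E u X (Sum.inl h) = Sum.inl (E.sig h) := by
  simp [graftSig, h1, h2]
@[simp] lemma graftSig_inr_inl (z : X.H) :
    graftSig E u X (Sum.inr (Sum.inl z)) = Sum.inr (Sum.inl (X.sig z)) := rfl
@[simp] lemma graftSig_false : graftSig E u X (Sum.inr (Sum.inr false)) = Sum.inl u := rfl
@[simp] lemma graftSig_true : graftSig E u X (Sum.inr (Sum.inr true)) = Sum.inl (E.sig u) := rfl
@[simp] lemma graftColor_inl (h : E.H) : graftColor E u X (Sum.inl h) = E.color h := rfl
@[simp] lemma graftColor_inr_inl (z : X.H) : graftColor E u X (Sum.inr (Sum.inl z)) = X.color z := rfl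
@[simp] lemma graftColor_inr_inr (b : Bool) : graftColor E u X (Sum.inr (Sum.inr b)) = E.color u := rfl

/-- The grafted diagram itself. -/
noncomputable def graftDiagram : Diagram k where
  H := E.H ⊕ (X.H ⊕ Bool)
  fin := inferInstance
  dec := inferInstance
  sig := graftSig E u X
  sig_invol := graftSig_invol E u X
  sig_ne := graftSig_ne E u X
  tau := graftTau E u X
  tau_cube := graftTau_cube E u X
  color := graftColor E u X
  conn := graft_conn E u X

lemma isGraft_graftDiagram : IsGraft E u X (graftDiagram E u X) :=
  ⟨Equiv.refl _, fun _ => rfl, fun _ => rfl, fun _ _ => rfl⟩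

lemma graftDiagram_reach {p q} (h : GReach E u X p q) : (graftDiagram E u X).Reach p q := h

end Graft

lemma iso_mem_BhlRel {k : ℕ} {A B : Diagram k} (h : Diagram.Iso A B) :
    fd A - fd B ∈ BhlRel k :=
  Submodule.subset_span (Set.mem_union_left _ (Set.mem_union_left _ (Set.mem_union_left _
    (Set.mem_union_left _ ⟨A, B, h, rfl⟩))))

lemma as_mem_BhlRel {k : ℕ} {v : FreeD k} (h : v ∈ ASRel k) : v ∈ BhlRel k :=
  Submodule.subset_span (Set.mem_union_left _ (Set.mem_union_left _ (Set.mem_union_left _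
    (Set.mem_union_right _ h))))

lemma boring_mem_BhlRel {k : ℕ} {A : Diagram k} (h : A.HasBoring) : fd A ∈ BhlRel k :=
  Submodule.subset_span (Set.mem_union_left _ (Set.mem_union_right _ ⟨A, h, rfl⟩))

lemma link_mem_BhlRel {k : ℕ} {v : FreeD k} (h : v ∈ LinkRel k) : v ∈ BhlRel k :=
  Submodule.subset_span (Set.mem_union_right _ h)

/-- Bundle of the hypotheses of Statement 1 (plus `¬ HasBoring`, the non-degenerate case). -/
structure Setup (k : ℕ) where
  D : Diagram k
  h0 : D.H
  x : D.H
  y : D.H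
  i : Fin k
  j : Fin k
  hk : 3 ≤ k
  htree : D.IsTreeAt h0
  hcol : ∀ c : Fin k, ∃! z : D.H, z ∈ D.univIn h0 ∧ D.color z = c
  hij : i ≠ j
  hx : x ∈ D.univIn h0
  hy : y ∈ D.univIn h0
  hxc : D.color x = i
  hyc : D.color y = j
  htriv : D.tau (D.sig x) ≠ D.sig x
  hadj : D.sig y = D.tau (D.sig x) ∨ D.sig y = D.tau (D.tau (D.sig x))
  hnb : ¬ D.HasBoring

namespace Setup

variable {k : ℕ} (S : Setup k)

def comp : Set S.D.H := S.D.compSet S.h0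

def sx : S.D.H := S.D.sig S.x

def sy : S.D.H := S.D.sig S.y

noncomputable def w : S.D.H :=
  if S.D.tau S.sx = S.sy then S.D.tau (S.D.tau S.sx) else S.D.tau S.sx

lemma xfix : S.D.tau S.x = S.x := S.hx.2
lemma yfix : S.D.tau S.y = S.y := S.hy.2
lemma xmem : S.x ∈ S.comp := S.hx.1
lemma ymem : S.y ∈ S.comp := S.hy.1
lemma sxmem : S.sx ∈ S.comp := Diagram.mem_comp_sig S.xmem
lemma symem : S.sy ∈ S.comp := Diagram.mem_comp_sig S.ymem

lemma xney : S.x ≠ S.y := by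
  intro h
  exact S.hij (S.hxc ▸ S.hyc ▸ congrArg S.D.color h)

lemma sxnesy : S.sx ≠ S.sy := fun h => S.xney (Diagram.sig_inj h)

lemma sxnonfix : S.D.tau S.sx ≠ S.sx := S.htriv

lemma orbdist : S.D.tau S.sx ≠ S.sx ∧ S.D.tau (S.D.tau S.sx) ≠ S.sx ∧
    S.D.tau (S.D.tau S.sx) ≠ S.D.tau S.sx := Diagram.orbit_distinct S.htriv

lemma hadj' : S.sy = S.D.tau S.sx ∨ S.sy = S.D.tau (S.D.tau S.sx) := S.hadj

/-- The rotation at the common trivalent vertex: either `(sx, sy, w)` or `(sx, w, sy)`. -/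
lemma horb : (S.D.tau S.sx = S.sy ∧ S.D.tau S.sy = S.w ∧ S.D.tau S.w = S.sx) ∨
    (S.D.tau S.sx = S.w ∧ S.D.tau S.w = S.sy ∧ S.D.tau S.sy = S.sx) := by
  have hc : S.D.tau (S.D.tau (S.D.tau S.sx)) = S.sx := S.D.tau_cube S.sx
  have hw : S.w = if S.D.tau S.sx = S.sy then S.D.tau (S.D.tau S.sx) else S.D.tau S.sx := rfl
  rcases S.hadj' with h1 | h1
  · left
    rw [hw, if_pos h1.symm]
    exact ⟨h1.symm, by rw [← h1], hc⟩
  · right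
    have hne : ¬ S.D.tau S.sx = S.sy := by
      intro h2
      exact S.orbdist.2.2 (h1.symm.trans h2.symm)
    rw [hw, if_neg hne]
    exact ⟨rfl, h1.symm, by rw [h1]; exact hc⟩

lemma synonfix : S.D.tau S.sy ≠ S.sy := by
  have hc : S.D.tau (S.D.tau (S.D.tau S.sx)) = S.sx := S.D.tau_cube S.sx
  rcases S.hadj' with h1 | h1 <;> rw [h1]
  · intro h; exact S.orbdist.2.2 h
  · rw [hc]; intro h; exact S.orbdist.2.1 h.symm

lemma wnonfix : S.D.tau S.w ≠ S.w := by
  rcases S.horb with ⟨h1, h2, h3⟩ | ⟨h1, h2, h3⟩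
  · intro h
    have hws : S.w = S.sx := h.symm.trans h3
    have hw2 : S.D.tau (S.D.tau S.sx) = S.w := (congrArg S.D.tau h1).trans h2
    exact S.orbdist.2.1 (hw2.trans hws)
  · intro h
    have hws : S.w = S.sy := h.symm.trans h2
    rw [hws] at h
    exact S.sxnesy (h3.symm.trans h)

lemma wmem : S.w ∈ S.comp := by
  rcases S.horb with ⟨h1, h2, _⟩ | ⟨h1, _, _⟩
  · rw [← h2]; exact Diagram.mem_comp_tau S.symem
  · rw [← h1]; exact Diagram.mem_comp_tau S.sxmem

lemma wnesx : S.w ≠ S.sx := by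
  rcases S.horb with ⟨h1, h2, h3⟩ | ⟨h1, h2, h3⟩
  · have hw2 : S.D.tau (S.D.tau S.sx) = S.w := (congrArg S.D.tau h1).trans h2
    rw [← hw2]
    exact S.orbdist.2.1
  · rw [← h1]
    exact S.sxnonfix

lemma wnesy : S.w ≠ S.sy := by
  intro h
  rcases S.horb with ⟨h1, h2, h3⟩ | ⟨h1, h2, h3⟩
  · rw [h] at h2; exact S.synonfix h2
  · rw [h] at h2; exact S.synonfix h2

lemma xnesx : S.x ≠ S.sx := fun h => S.sxnonfix (by rw [← h]; exact S.xfix)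
lemma xnesy : S.x ≠ S.sy := fun h => S.synonfix (by rw [← h]; exact S.xfix)
lemma xnew : S.x ≠ S.w := fun h => S.wnonfix (by rw [← h]; exact S.xfix)
lemma ynesx : S.y ≠ S.sx := fun h => S.sxnonfix (by rw [← h]; exact S.yfix)
lemma ynesy : S.y ≠ S.sy := fun h => S.synonfix (by rw [← h]; exact S.yfix)
lemma ynew : S.y ≠ S.w := fun h => S.wnonfix (by rw [← h]; exact S.yfix)


/-! ### The diagram `E`: `D` with the component of `h0` replaced by an `i`-`j` chord -/

def Pset : Set S.D.H := {h | h ∉ S.comp ∨ h = S.x ∨ h = S.y}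

lemma x_mem_Pset : S.x ∈ S.Pset := Or.inr (Or.inl rfl)
lemma y_mem_Pset : S.y ∈ S.Pset := Or.inr (Or.inr rfl)
lemma not_comp_mem_Pset {h : S.D.H} (hh : h ∉ S.comp) : h ∈ S.Pset := Or.inl hh

lemma not_comp_of_Pset {h : S.D.H} (hh : h ∈ S.Pset) (h1 : h ≠ S.x) (h2 : h ≠ S.y) :
    h ∉ S.comp := by
  rcases hh with hc | hc | hc
  · exact hc
  · exact absurd hc h1
  · exact absurd hc h2

noncomputable def esigFun (h : ↥S.Pset) : ↥S.Pset :=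
  if h1 : h.1 = S.x then ⟨S.y, S.y_mem_Pset⟩
  else if h2 : h.1 = S.y then ⟨S.x, S.x_mem_Pset⟩
  else ⟨S.D.sig h.1, Or.inl fun hc =>
    S.not_comp_of_Pset h.2 h1 h2 (Diagram.sig_mem_comp_iff.mp hc)⟩

noncomputable def etauFun (h : ↥S.Pset) : ↥S.Pset :=
  ⟨S.D.tau h.1, by
    rcases h.2 with hc | hx1 | hy1
    · exact Or.inl fun hc2 => hc (Diagram.tau_mem_comp_iff.mp hc2)
    · rw [hx1, S.xfix]; exact S.x_mem_Pset
    · rw [hy1, S.yfix]; exact S.y_mem_Pset⟩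

@[simp] lemma etauFun_val (h : ↥S.Pset) : (S.etauFun h).1 = S.D.tau h.1 := rfl

lemma esigFun_x (h : ↥S.Pset) (hh : h.1 = S.x) : S.esigFun h = ⟨S.y, S.y_mem_Pset⟩ := by
  simp [esigFun, hh]

lemma esigFun_y (h : ↥S.Pset) (hh : h.1 = S.y) : S.esigFun h = ⟨S.x, S.x_mem_Pset⟩ := by
  have : ¬ h.1 = S.x := by rw [hh]; exact fun e => S.xney e.symm
  simp [esigFun, this, hh]

lemma esigFun_other (h : ↥S.Pset) (h1 : h.1 ≠ S.x) (h2 : h.1 ≠ S.y) :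
    (S.esigFun h).1 = S.D.sig h.1 := by
  simp [esigFun, h1, h2]

lemma esigFun_invol (h : ↥S.Pset) : S.esigFun (S.esigFun h) = h := by
  by_cases h1 : h.1 = S.x
  · rw [S.esigFun_x h h1, S.esigFun_y _ rfl]
    exact Subtype.ext h1.symm
  · by_cases h2 : h.1 = S.y
    · rw [S.esigFun_y h h2, S.esigFun_x _ rfl]
      exact Subtype.ext h2.symm
    · have hc : h.1 ∉ S.comp := S.not_comp_of_Pset h.2 h1 h2
      have hv : (S.esigFun h).1 = S.D.sig h.1 := S.esigFun_other h h1 h2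
      have h3 : (S.esigFun h).1 ≠ S.x := by
        rw [hv]; intro e
        exact hc (by rw [← S.D.sig_invol h.1, e]; exact S.sxmem)
      have h4 : (S.esigFun h).1 ≠ S.y := by
        rw [hv]; intro e
        exact hc (by rw [← S.D.sig_invol h.1, e]; exact S.symem)
      apply Subtype.ext
      rw [S.esigFun_other _ h3 h4, hv, S.D.sig_invol]

lemma esigFun_ne (h : ↥S.Pset) : S.esigFun h ≠ h := by
  by_cases h1 : h.1 = S.x
  · rw [S.esigFun_x h h1]
    intro e
    exact S.xney (by rw [← h1, ← e])
  · by_cases h2 : h.1 = S.y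
    · rw [S.esigFun_y h h2]
      intro e
      exact S.xney (by rw [← h2, ← e])
    · intro e
      have := congrArg Subtype.val e
      rw [S.esigFun_other h h1 h2] at this
      exact S.D.sig_ne h.1 this

lemma etauFun_cube (h : ↥S.Pset) : S.etauFun (S.etauFun (S.etauFun h)) = h :=
  Subtype.ext (S.D.tau_cube h.1)

lemma reach_lift_compl {a b : S.D.H} (ha : a ∉ S.comp) (hr : S.D.Reach a b) :
    ∃ hb : b ∉ S.comp,
      Relation.ReflTransGen (fun p q => q = S.esigFun p ∨ q = S.etauFun p)
        ⟨a, Or.inl ha⟩ ⟨b, Or.inl hb⟩ := by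
  induction hr with
  | refl => exact ⟨ha, Relation.ReflTransGen.refl⟩
  | tail _ hbc ih =>
    obtain ⟨hb, hpath⟩ := ih
    rename_i b' c' _
    have hbx : b' ≠ S.x := fun e => hb (e ▸ S.xmem)
    have hby : b' ≠ S.y := fun e => hb (e ▸ S.ymem)
    rcases hbc with rfl | rfl
    · have hc : S.D.sig b' ∉ S.comp := fun hc => hb (Diagram.sig_mem_comp_iff.mp hc)
      refine ⟨hc, hpath.tail (Or.inl (Subtype.ext ?_))⟩
      rw [S.esigFun_other _ hbx hby]
    · have hc : S.D.tau b' ∉ S.comp := fun hc => hb (Diagram.tau_mem_comp_iff.mp hc)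
      exact ⟨hc, hpath.tail (Or.inr (Subtype.ext rfl))⟩

noncomputable def E : Diagram k where
  H := ↥S.Pset
  fin := (Set.toFinite _).fintype
  dec := Subtype.instDecidableEq
  sig := S.esigFun
  sig_invol := S.esigFun_invol
  sig_ne := S.esigFun_ne
  tau := S.etauFun
  tau_cube := S.etauFun_cube
  color := fun h => S.D.color h.1
  conn := by
    intro h
    rcases h with ⟨hv, hmem⟩
    rcases hmem with hc | hx1 | hy1
    · obtain ⟨h', hpath, hfix⟩ := S.D.conn hv
      obtain ⟨hb, hpath'⟩ := S.reach_lift_compl hc hpath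
      exact ⟨⟨h', Or.inl hb⟩, hpath', Subtype.ext hfix⟩
    · refine ⟨⟨hv, Or.inr (Or.inl hx1)⟩, Relation.ReflTransGen.refl, Subtype.ext ?_⟩
      show S.D.tau hv = hv
      rw [hx1]; exact S.xfix
    · refine ⟨⟨hv, Or.inr (Or.inr hy1)⟩, Relation.ReflTransGen.refl, Subtype.ext ?_⟩
      show S.D.tau hv = hv
      rw [hy1]; exact S.yfix

@[simp] lemma E_tau (h : S.E.H) : S.E.tau h = S.etauFun h := rfl
@[simp] lemma E_sig (h : S.E.H) : S.E.sig h = S.esigFun h := rfl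
@[simp] lemma E_color (h : S.E.H) : S.E.color h = S.D.color h.1 := rfl


/-! ### The grafting tree `X`: the component of `h0` minus the legs at `x` and `y` -/

def Xset : Set S.D.H := {z | z ∈ S.comp ∧ z ≠ S.x ∧ z ≠ S.sx ∧ z ≠ S.y ∧ z ≠ S.sy}

lemma w_mem_Xset : S.w ∈ S.Xset :=
  ⟨S.wmem, (S.xnew).symm, fun e => S.wnesx e, (S.ynew).symm, fun e => S.wnesy e⟩

lemma sig_mem_Xset {z : S.D.H} (hz : z ∈ S.Xset) : S.D.sig z ∈ S.Xset := by
  obtain ⟨hc, h1, h2, h3, h4⟩ := hz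
  refine ⟨Diagram.mem_comp_sig hc, ?_, ?_, ?_, ?_⟩
  · intro e; exact h2 (by rw [← S.D.sig_invol z, e]; rfl)
  · intro e; exact h1 (Diagram.sig_inj e)
  · intro e; exact h4 (by rw [← S.D.sig_invol z, e]; rfl)
  · intro e; exact h3 (Diagram.sig_inj e)

lemma tau_mem_Xset {z : S.D.H} (hz : z ∈ S.Xset) (hw : z ≠ S.w) : S.D.tau z ∈ S.Xset := by
  obtain ⟨hc, h1, h2, h3, h4⟩ := hz
  refine ⟨Diagram.mem_comp_tau hc, ?_, ?_, ?_, ?_⟩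
  · intro e
    exact h1 (Diagram.tau_inj (e.trans S.xfix.symm))
  · intro e
    rcases S.horb with ⟨o1, o2, o3⟩ | ⟨o1, o2, o3⟩
    · exact hw (Diagram.tau_inj (e.trans o3.symm))
    · exact h4 (Diagram.tau_inj (e.trans o3.symm))
  · intro e
    exact h3 (Diagram.tau_inj (e.trans S.yfix.symm))
  · intro e
    rcases S.horb with ⟨o1, o2, o3⟩ | ⟨o1, o2, o3⟩
    · exact h2 (Diagram.tau_inj (e.trans o1.symm))
    · exact hw (Diagram.tau_inj (e.trans o2.symm))

lemma tau_ne_w_of_Xset {z : S.D.H} (hz : z ∈ S.Xset) (hw : z ≠ S.w) : S.D.tau z ≠ S.w := by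
  intro e
  rcases S.horb with ⟨o1, o2, o3⟩ | ⟨o1, o2, o3⟩
  · exact hz.2.2.2.2 (Diagram.tau_inj (e.trans o2.symm))
  · exact hz.2.2.1 (Diagram.tau_inj (e.trans o1.symm))

noncomputable def xsigFun (z : ↥S.Xset) : ↥S.Xset := ⟨S.D.sig z.1, S.sig_mem_Xset z.2⟩

noncomputable def xtauFun (z : ↥S.Xset) : ↥S.Xset :=
  if hw : z.1 = S.w then z else ⟨S.D.tau z.1, S.tau_mem_Xset z.2 hw⟩

lemma xtauFun_w (z : ↥S.Xset) (hz : z.1 = S.w) : S.xtauFun z = z := by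
  simp [xtauFun, hz]

lemma xtauFun_other (z : ↥S.Xset) (hz : z.1 ≠ S.w) :
    S.xtauFun z = ⟨S.D.tau z.1, S.tau_mem_Xset z.2 hz⟩ := by
  simp [xtauFun, hz]

lemma xtauFun_cube (z : ↥S.Xset) : S.xtauFun (S.xtauFun (S.xtauFun z)) = z := by
  by_cases hw : z.1 = S.w
  · rw [S.xtauFun_w z hw, S.xtauFun_w z hw, S.xtauFun_w z hw]
  · rw [S.xtauFun_other z hw]
    have h1 : S.D.tau z.1 ≠ S.w := S.tau_ne_w_of_Xset z.2 hw
    rw [S.xtauFun_other ⟨S.D.tau z.1, S.tau_mem_Xset z.2 hw⟩ h1]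
    have h2 : S.D.tau (S.D.tau z.1) ≠ S.w :=
      S.tau_ne_w_of_Xset (S.tau_mem_Xset z.2 hw) h1
    rw [S.xtauFun_other ⟨S.D.tau (S.D.tau z.1),
      S.tau_mem_Xset (S.tau_mem_Xset z.2 hw) h1⟩ h2]
    exact Subtype.ext (S.D.tau_cube z.1)

lemma xreach_to_w_aux {a : S.D.H} (hr : S.D.Reach a S.w) :
    ∀ ha : a ∈ S.Xset,
      Relation.ReflTransGen (fun p q => q = S.xsigFun p ∨ q = S.xtauFun p)
        ⟨a, ha⟩ ⟨S.w, S.w_mem_Xset⟩ := by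
  induction hr using Relation.ReflTransGen.head_induction_on with
  | refl => intro ha; exact Relation.ReflTransGen.refl
  | head hstep htail ih =>
    intro ha
    rename_i a' c' 
    by_cases haw : a' = S.w
    · subst haw
      exact Relation.ReflTransGen.refl
    · rcases hstep with rfl | rfl
      · have hc : S.D.sig a' ∈ S.Xset := S.sig_mem_Xset ha
        exact Relation.ReflTransGen.head (Or.inl (Subtype.ext rfl)) (ih hc)
      · have hc : S.D.tau a' ∈ S.Xset := S.tau_mem_Xset ha haw
        refine Relation.ReflTransGen.head (Or.inr ?_) (ih hc)
        exact Subtype.ext (by rw [S.xtauFun_other ⟨a', ha⟩ haw])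

/-- Rerouting: every element of `Xset` reaches `w` inside `X`. -/
lemma xreach_to_w {z : S.D.H} (hz : z ∈ S.Xset) :
    Relation.ReflTransGen (fun p q => q = S.xsigFun p ∨ q = S.xtauFun p)
      ⟨z, hz⟩ ⟨S.w, S.w_mem_Xset⟩ :=
  S.xreach_to_w_aux (Diagram.reach_of_mem_comp hz.1 S.wmem) hz

/-! ### Counting -/

lemma univIn_ncard : (S.D.univIn S.h0).ncard = k := by
  have hb : Function.Bijective (fun z : ↥(S.D.univIn S.h0) => S.D.color z.1) := by
    constructor
    · rintro ⟨a, ha⟩ ⟨b, hb⟩ hab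
      obtain ⟨z, hz, huniq⟩ := S.hcol (S.D.color a)
      exact Subtype.ext ((huniq a ⟨ha, rfl⟩).trans (huniq b ⟨hb, hab.symm⟩).symm)
    · intro c
      obtain ⟨z, hz, -⟩ := S.hcol c
      exact ⟨⟨z, hz.1⟩, hz.2⟩
  have := Nat.card_eq_of_bijective _ hb
  rw [Nat.card_coe_set_eq] at this
  simpa using this

lemma comp_ncard : S.comp.ncard + 6 = 4 * k := by
  have := S.htree
  rw [Diagram.IsTreeAt, S.univIn_ncard] at this
  exact this

lemma Xset_eq : S.Xset = S.comp \ {S.x, S.sx, S.y, S.sy} := by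
  ext z
  simp only [Xset, Set.mem_diff, Set.mem_setOf_eq, Set.mem_insert_iff, Set.mem_singleton_iff]
  tauto

lemma quad_ncard : ({S.x, S.sx, S.y, S.sy} : Set S.D.H).ncard = 4 := by
  rw [Set.ncard_insert_of_notMem (by simp [S.xnesx, S.xney, S.xnesy]),
    Set.ncard_insert_of_notMem (by simp [Ne.symm S.ynesx, S.sxnesy]),
    Set.ncard_insert_of_notMem (by simp [S.ynesy]), Set.ncard_singleton]

lemma quad_sub : ({S.x, S.sx, S.y, S.sy} : Set S.D.H) ⊆ S.comp := by
  intro z hz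
  rcases hz with rfl | rfl | rfl | rfl
  · exact S.xmem
  · exact S.sxmem
  · exact S.ymem
  · exact S.symem

lemma Xset_card : Nat.card ↥S.Xset + 4 = S.comp.ncard := by
  rw [Nat.card_coe_set_eq, S.Xset_eq, Set.ncard_diff S.quad_sub, S.quad_ncard]
  have h4 : 4 ≤ S.comp.ncard := le_trans (by rw [← S.quad_ncard]) (Set.ncard_le_ncard S.quad_sub (Set.toFinite _))
  omega

lemma xfix_set_card :
    Nat.card {h : ↥S.Xset // S.xtauFun h = h} + 1 = k := by
  classical
  set T : Set S.D.H := insert S.w ((S.D.univIn S.h0) \ {S.x, S.y}) with hT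
  have hb : Function.Bijective
      (fun z : {h : ↥S.Xset // S.xtauFun h = h} => (⟨z.1.1, by
        by_cases hw : z.1.1 = S.w
        · exact Or.inl hw
        · right
          have := z.2
          rw [S.xtauFun_other z.1 hw] at this
          have hfix : S.D.tau z.1.1 = z.1.1 := congrArg Subtype.val this
          exact ⟨⟨z.1.2.1, hfix⟩, by simp [z.1.2.2.1, z.1.2.2.2.2.1]⟩⟩ : ↥T)) := by
    constructor
    · rintro a b hab
      have hval : (a.1.1 : S.D.H) = b.1.1 := congrArg (fun t : ↥T => (t.1 : S.D.H)) hab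
      exact Subtype.ext (Subtype.ext hval)
    · rintro ⟨t, ht⟩
      rcases ht with rfl | ht
      · exact ⟨⟨⟨S.w, S.w_mem_Xset⟩, S.xtauFun_w _ rfl⟩, rfl⟩
      · obtain ⟨⟨hreach, hfix⟩, hne⟩ := ht
        have hnx : t ≠ S.x := by intro e; apply hne; rw [e]; exact Or.inl rfl
        have hny : t ≠ S.y := by intro e; apply hne; rw [e]; exact Or.inr rfl
        have hmem : t ∈ S.Xset :=
          ⟨hreach, hnx, fun e => S.sxnonfix (by rw [← e]; exact hfix),
            hny, fun e => S.synonfix (by rw [← e]; exact hfix)⟩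
        refine ⟨⟨⟨t, hmem⟩, ?_⟩, rfl⟩
        by_cases hw : t = S.w
        · exact S.xtauFun_w _ hw
        · rw [S.xtauFun_other _ hw]
          exact Subtype.ext hfix
  have hcard := Nat.card_eq_of_bijective _ hb
  rw [Nat.card_coe_set_eq] at hcard
  have hwnot : S.w ∉ (S.D.univIn S.h0) \ {S.x, S.y} := by
    rintro ⟨⟨-, hfix⟩, -⟩
    exact S.wnonfix hfix
  have hsub2 : ({S.x, S.y} : Set S.D.H) ⊆ S.D.univIn S.h0 := by
    intro z hz
    rcases hz with rfl | rfl
    · exact S.hx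
    · exact S.hy
  have hT2 : T.ncard = ((S.D.univIn S.h0) \ {S.x, S.y}).ncard + 1 :=
    Set.ncard_insert_of_notMem hwnot (Set.toFinite _)
  have hT3 : ((S.D.univIn S.h0) \ {S.x, S.y}).ncard = k - 2 := by
    rw [Set.ncard_diff hsub2, S.univIn_ncard]
    congr 1
    rw [Set.ncard_insert_of_notMem (by simp [S.xney]), Set.ncard_singleton]
  have hk := S.hk
  rw [hcard, hT2, hT3]
  omega

lemma Xtree : Nat.card ↥S.Xset + 6 = 4 * Nat.card {h : ↥S.Xset // S.xtauFun h = h} := by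
  have h1 := S.Xset_card
  have h2 := S.comp_ncard
  have h3 := S.xfix_set_card
  have hk := S.hk
  omega

noncomputable def X : GraftTree k where
  H := ↥S.Xset
  fin := (Set.toFinite _).fintype
  dec := Subtype.instDecidableEq
  sig := S.xsigFun
  sig_invol := fun z => Subtype.ext (S.D.sig_invol z.1)
  sig_ne := fun z e => S.D.sig_ne z.1 (congrArg Subtype.val e)
  tau := S.xtauFun
  tau_cube := S.xtauFun_cube
  root := ⟨S.w, S.w_mem_Xset⟩
  root_fix := S.xtauFun_w _ rfl
  color := fun z => S.D.color z.1
  conn := fun z => rtg_symm (fun p => Subtype.ext (S.D.sig_invol p.1)) S.xtauFun_cube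
    (S.xreach_to_w z.2)
  tree := S.Xtree

@[simp] lemma X_tau (z : S.X.H) : S.X.tau z = S.xtauFun z := rfl
@[simp] lemma X_sig (z : S.X.H) : S.X.sig z = S.xsigFun z := rfl
@[simp] lemma X_color (z : S.X.H) : S.X.color z = S.D.color z.1 := rfl
@[simp] lemma X_root : S.X.root = ⟨S.w, S.w_mem_Xset⟩ := rfl



/-! ### The key lemma: grafting `X` at the `i`-end of an `i`-`j` chord gives `± D` -/

def Mset : Set S.D.H := {z | S.D.tau z = z ∧ S.D.tau (S.D.sig z) = S.D.sig z ∧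
  S.D.color z = S.i ∧ S.D.color (S.D.sig z) = S.j}

lemma mset_ne_x {z : S.D.H} (hz : z ∈ S.Mset) : z ≠ S.x := by
  intro e
  rw [e] at hz
  exact S.htriv hz.2.1

lemma mset_not_comp {z : S.D.H} (hz : z ∈ S.Mset) : z ∉ S.comp := by
  intro hc
  obtain ⟨z', hz', huniq⟩ := S.hcol S.i
  have h1 : z = z' := huniq z ⟨⟨hc, hz.1⟩, hz.2.2.1⟩
  have h2 : S.x = z' := huniq S.x ⟨S.hx, S.hxc⟩
  have hzx : z = S.x := h1.trans h2.symm
  rw [hzx] at hz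
  exact S.htriv hz.2.1

variable (u : S.D.H)

noncomputable def spart : S.D.H := if u = S.x then S.y else S.D.sig u

noncomputable def sigma0 (h : S.D.H) : S.D.H :=
  if h = S.x then u
  else if h = u then S.x
  else if h = S.y then S.spart u
  else if h = S.spart u then S.y
  else h

noncomputable def keyF : (S.E.H ⊕ (S.X.H ⊕ Bool)) → S.D.H
  | Sum.inl h => S.sigma0 u h.1
  | Sum.inr (Sum.inl z) => z.1
  | Sum.inr (Sum.inr false) => S.sx
  | Sum.inr (Sum.inr true) => S.sy

variable {u}

section KeyFacts

variable (hu : u = S.x ∨ u ∈ S.Mset)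
include hu

lemma u_mem_Pset : u ∈ S.Pset := by
  rcases hu with rfl | hm
  · exact S.x_mem_Pset
  · exact Or.inl (S.mset_not_comp hm)

lemma ufix : S.D.tau u = u := by
  rcases hu with rfl | hm
  · exact S.xfix
  · exact hm.1

lemma ucol : S.D.color u = S.i := by
  rcases hu with rfl | hm
  · exact S.hxc
  · exact hm.2.2.1

lemma u_ne_y : u ≠ S.y := by
  intro e
  have := S.ucol hu
  rw [e, S.hyc] at this
  exact S.hij this.symm

lemma u_ne_sx : u ≠ S.sx := fun e => S.sxnonfix (by rw [← e]; exact S.ufix hu)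
lemma u_ne_sy : u ≠ S.sy := fun e => S.synonfix (by rw [← e]; exact S.ufix hu)
lemma u_ne_w : u ≠ S.w := fun e => S.wnonfix (by rw [← e]; exact S.ufix hu)

lemma sfix : S.D.tau (S.spart u) = S.spart u := by
  rcases hu with rfl | hm
  · rw [spart, if_pos rfl]; exact S.yfix
  · rw [spart, if_neg (S.mset_ne_x hm)]
    exact hm.2.1

lemma scol : S.D.color (S.spart u) = S.j := by
  rcases hu with rfl | hm
  · rw [spart, if_pos rfl]; exact S.hyc
  · rw [spart, if_neg (S.mset_ne_x hm)]
    exact hm.2.2.2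

lemma s_mem_Pset : S.spart u ∈ S.Pset := by
  rcases hu with rfl | hm
  · rw [spart, if_pos rfl]; exact S.y_mem_Pset
  · rw [spart, if_neg (S.mset_ne_x hm)]
    exact Or.inl fun hc => S.mset_not_comp hm (Diagram.sig_mem_comp_iff.mp hc)

lemma s_ne_x : S.spart u ≠ S.x := by
  intro e
  have := S.scol hu
  rw [e, S.hxc] at this
  exact S.hij this

lemma s_ne_u : S.spart u ≠ u := by
  rcases hu with rfl | hm
  · rw [spart, if_pos rfl]; exact Ne.symm S.xney
  · rw [spart, if_neg (S.mset_ne_x hm)]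
    exact S.D.sig_ne u

lemma s_ne_sx : S.spart u ≠ S.sx := fun e => S.sxnonfix (by rw [← e]; exact S.sfix hu)
lemma s_ne_sy : S.spart u ≠ S.sy := fun e => S.synonfix (by rw [← e]; exact S.sfix hu)
lemma s_ne_w : S.spart u ≠ S.w := fun e => S.wnonfix (by rw [← e]; exact S.sfix hu)

lemma sig_u_eq : S.D.sig u = (if u = S.x then S.sx else S.spart u) := by
  rcases hu with rfl | hm
  · rw [if_pos rfl]; rfl
  · rw [if_neg (S.mset_ne_x hm),
      spart, if_neg (S.mset_ne_x hm)]

omit hu in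
@[simp] lemma sigma0_x : S.sigma0 u S.x = u := by
  rw [sigma0, if_pos rfl]

omit hu in
lemma sigma0_u : S.sigma0 u u = S.x := by
  by_cases e : u = S.x
  · rw [sigma0, if_pos e, e]
  · rw [sigma0, if_neg e, if_pos rfl]

lemma sigma0_y : S.sigma0 u S.y = S.spart u := by
  rw [sigma0, if_neg (Ne.symm S.xney), if_neg (fun e => S.u_ne_y hu e.symm), if_pos rfl]

lemma sigma0_s : S.sigma0 u (S.spart u) = S.y := by
  by_cases e : u = S.x
  · have hs : S.spart u = S.y := by rw [spart, if_pos e]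
    rw [hs, sigma0, if_neg (Ne.symm S.xney), if_neg (fun e2 => S.u_ne_y hu e2.symm)]
    rw [if_pos rfl, hs]
  · rw [sigma0, if_neg (S.s_ne_x hu), if_neg (S.s_ne_u hu)]
    have hsy : S.spart u ≠ S.y := by
      rw [spart, if_neg e]
      intro e2
      rcases hu with rfl | hm
      · exact e rfl
      · exact S.mset_not_comp hm (by rw [← S.D.sig_invol u, e2]; exact S.symem)
    rw [if_neg hsy, if_pos rfl]

omit hu in
lemma sigma0_other {h : S.D.H} (h1 : h ≠ S.x) (h2 : h ≠ u) (h3 : h ≠ S.y)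
    (h4 : h ≠ S.spart u) : S.sigma0 u h = h := by
  rw [sigma0, if_neg h1, if_neg h2, if_neg h3, if_neg h4]

lemma sigma0_invol (a : S.D.H) : S.sigma0 u (S.sigma0 u a) = a := by
  by_cases h1 : a = S.x
  · rw [h1, S.sigma0_x, S.sigma0_u]
  · by_cases h2 : a = u
    · rw [h2, S.sigma0_u, S.sigma0_x]
    · by_cases h3 : a = S.y
      · rw [h3, S.sigma0_y hu, S.sigma0_s hu]
      · by_cases h4 : a = S.spart u
        · rw [h4, S.sigma0_s hu, S.sigma0_y hu]
        · rw [S.sigma0_other h1 h2 h3 h4, S.sigma0_other h1 h2 h3 h4]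

lemma sigma0_tau (a : S.D.H) : S.sigma0 u (S.D.tau a) = S.D.tau (S.sigma0 u a) := by
  by_cases h1 : a = S.x
  · rw [h1, S.xfix, S.sigma0_x, S.ufix hu]
  · by_cases h2 : a = u
    · rw [h2, S.ufix hu, S.sigma0_u, S.xfix]
    · by_cases h3 : a = S.y
      · rw [h3, S.yfix, S.sigma0_y hu, S.sfix hu]
      · by_cases h4 : a = S.spart u
        · rw [h4, S.sfix hu, S.sigma0_s hu, S.yfix]
        · have t1 : S.D.tau a ≠ S.x := fun e => h1 (Diagram.tau_inj (e.trans S.xfix.symm))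
          have t2 : S.D.tau a ≠ u := fun e => h2 (Diagram.tau_inj (e.trans (S.ufix hu).symm))
          have t3 : S.D.tau a ≠ S.y := fun e => h3 (Diagram.tau_inj (e.trans S.yfix.symm))
          have t4 : S.D.tau a ≠ S.spart u :=
            fun e => h4 (Diagram.tau_inj (e.trans (S.sfix hu).symm))
          rw [S.sigma0_other t1 t2 t3 t4, S.sigma0_other h1 h2 h3 h4]

lemma sigma0_color (a : S.D.H) : S.D.color (S.sigma0 u a) = S.D.color a := by
  by_cases h1 : a = S.x
  · rw [h1, S.sigma0_x, S.ucol hu, S.hxc]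
  · by_cases h2 : a = u
    · rw [h2, S.sigma0_u, S.ucol hu, S.hxc]
    · by_cases h3 : a = S.y
      · rw [h3, S.sigma0_y hu, S.scol hu, S.hyc]
      · by_cases h4 : a = S.spart u
        · rw [h4, S.sigma0_s hu, S.scol hu, S.hyc]
        · rw [S.sigma0_other h1 h2 h3 h4]

lemma sigma0_mem_Pset {h : S.D.H} (hh : h ∈ S.Pset) : S.sigma0 u h ∈ S.Pset := by
  by_cases h1 : h = S.x
  · rw [h1, S.sigma0_x]; exact S.u_mem_Pset hu
  · by_cases h2 : h = u
    · rw [h2, S.sigma0_u]; exact S.x_mem_Pset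
    · by_cases h3 : h = S.y
      · rw [h3, S.sigma0_y hu]; exact S.s_mem_Pset hu
      · by_cases h4 : h = S.spart u
        · rw [h4, S.sigma0_s hu]; exact S.y_mem_Pset
        · rw [S.sigma0_other h1 h2 h3 h4]; exact hh

omit hu in
lemma sx_not_Pset : S.sx ∉ S.Pset := by
  rintro (hc | e | e)
  · exact hc S.sxmem
  · exact S.xnesx e.symm
  · exact S.ynesx e.symm

omit hu in
lemma sy_not_Pset : S.sy ∉ S.Pset := by
  rintro (hc | e | e)
  · exact hc S.symem
  · exact S.xnesy e.symm
  · exact S.ynesy e.symm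

omit hu in
lemma Xset_not_Pset {z : S.D.H} (hz : z ∈ S.Xset) : z ∉ S.Pset := by
  rintro (hc | e | e)
  · exact hc hz.1
  · exact hz.2.1 e
  · exact hz.2.2.2.1 e

lemma keyF_surj : Function.Surjective (S.keyF u) := by
  intro h
  by_cases hX : h ∈ S.Xset
  · exact ⟨Sum.inr (Sum.inl ⟨h, hX⟩), rfl⟩
  · by_cases hsx : h = S.sx
    · exact ⟨Sum.inr (Sum.inr false), hsx.symm⟩
    · by_cases hsy : h = S.sy
      · exact ⟨Sum.inr (Sum.inr true), hsy.symm⟩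
      · have hP : h ∈ S.Pset := by
          by_cases hc : h ∈ S.comp
          · by_cases hx1 : h = S.x
            · exact Or.inr (Or.inl hx1)
            · by_cases hy1 : h = S.y
              · exact Or.inr (Or.inr hy1)
              · exact absurd (⟨hc, hx1, hsx, hy1, hsy⟩ : h ∈ S.Xset) hX
          · exact Or.inl hc
        exact ⟨Sum.inl ⟨S.sigma0 u h, S.sigma0_mem_Pset hu hP⟩, S.sigma0_invol hu h⟩

omit hu in
@[simp] lemma keyF_inl (h : S.E.H) : S.keyF u (Sum.inl h) = S.sigma0 u h.1 := rfl
omit hu in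
@[simp] lemma keyF_inr_inl (z : S.X.H) : S.keyF u (Sum.inr (Sum.inl z)) = z.1 := rfl
omit hu in
@[simp] lemma keyF_false : S.keyF u (Sum.inr (Sum.inr false)) = S.sx := rfl
omit hu in
@[simp] lemma keyF_true : S.keyF u (Sum.inr (Sum.inr true)) = S.sy := rfl

lemma keyF_inj : Function.Injective (S.keyF u) := by
  have hP : ∀ h : S.E.H, S.sigma0 u h.1 ∈ S.Pset := fun h => S.sigma0_mem_Pset hu h.2
  rintro (h | z | (_ | _)) (h' | z' | (_ | _)) heq <;>
    simp only [keyF_inl, keyF_inr_inl, keyF_false, keyF_true] at heq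
  · apply congrArg Sum.inl
    apply Subtype.ext
    have := congrArg (S.sigma0 u) heq
    rwa [S.sigma0_invol hu, S.sigma0_invol hu] at this
  · exact absurd (heq ▸ hP h) (S.Xset_not_Pset z'.2)
  · exact absurd (heq ▸ hP h) S.sx_not_Pset
  · exact absurd (heq ▸ hP h) S.sy_not_Pset
  · exact absurd (heq.symm ▸ hP h') (S.Xset_not_Pset z.2)
  · exact congrArg (Sum.inr ∘ Sum.inl) (Subtype.ext heq)
  · exact absurd heq z.2.2.2.1
  · exact absurd heq z.2.2.2.2.2
  · exact absurd (heq ▸ hP h') S.sx_not_Pset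
  · exact absurd heq.symm z'.2.2.2.1
  · rfl
  · exact absurd heq S.sxnesy
  · exact absurd (heq ▸ hP h') S.sy_not_Pset
  · exact absurd heq.symm z'.2.2.2.2.2
  · exact absurd heq.symm S.sxnesy
  · rfl

lemma keyF_bij : Function.Bijective (S.keyF u) := ⟨S.keyF_inj hu, S.keyF_surj hu⟩

omit hu in
lemma mset_ne_y {z : S.D.H} (hm : z ∈ S.Mset) : z ≠ S.y :=
  fun e => S.mset_not_comp hm (by rw [e]; exact S.ymem)

lemma esig_uE : S.esigFun ⟨u, S.u_mem_Pset hu⟩ = ⟨S.spart u, S.s_mem_Pset hu⟩ := by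
  apply Subtype.ext
  show (S.esigFun ⟨u, S.u_mem_Pset hu⟩).1 = S.spart u
  obtain h | hm := id hu
  · rw [S.esigFun_x ⟨u, S.u_mem_Pset hu⟩ h, spart, if_pos h]
  · rw [S.esigFun_other ⟨u, S.u_mem_Pset hu⟩ (S.mset_ne_x hm) (S.mset_ne_y hm),
      spart, if_neg (S.mset_ne_x hm)]

lemma key_sig (p) :
    S.keyF u (graftSig S.E ⟨u, S.u_mem_Pset hu⟩ S.X p) = S.D.sig (S.keyF u p) := by
  have hsnc : ∀ hc : u ∈ S.Mset, u ∉ S.comp := fun hc => S.mset_not_comp hc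
  rcases p with h | z | (_ | _)
  · by_cases h1 : h = (⟨u, S.u_mem_Pset hu⟩ : S.E.H)
    · erw [h1, graftSig_inl_u, keyF_false, keyF_inl]
      show S.sx = S.D.sig (S.sigma0 u u)
      rw [S.sigma0_u]
      rfl
    · by_cases h2 : h = S.E.sig ⟨u, S.u_mem_Pset hu⟩
      · erw [h2, graftSig_inl_su, keyF_true, keyF_inl]
        have hEs : S.E.sig ⟨u, S.u_mem_Pset hu⟩ = ⟨S.spart u, S.s_mem_Pset hu⟩ :=
          S.esig_uE hu
        rw [hEs]
        show S.sy = S.D.sig (S.sigma0 u (S.spart u))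
        rw [S.sigma0_s hu]
        rfl
      · rw [graftSig_inl_other _ _ _ h1 h2, keyF_inl, keyF_inl]
        have hvu : h.1 ≠ u := fun e => h1 (Subtype.ext e)
        have hvs : h.1 ≠ S.spart u := fun e => h2 (Subtype.ext (by
          rw [e]
          exact congrArg Subtype.val (S.esig_uE hu).symm))
        by_cases hx1 : h.1 = S.x
        · have hum : u ∈ S.Mset := by
            rcases hu with rfl | hm
            · exact absurd hx1 hvu
            · exact hm
          rw [S.E_sig, S.esigFun_x h hx1]
          show S.sigma0 u S.y = S.D.sig (S.sigma0 u h.1)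
          rw [hx1, S.sigma0_x, S.sigma0_y hu, spart, if_neg (S.mset_ne_x hum)]
        · by_cases hy1 : h.1 = S.y
          · have hum : u ∈ S.Mset := by
              obtain rfl | hm := id hu
              · exfalso
                apply h2
                apply Subtype.ext
                rw [hy1]
                have hv := congrArg Subtype.val (S.esig_uE (Or.inl rfl))
                erw [S.E_sig, hv]
                show S.y = S.spart S.x
                rw [spart, if_pos rfl]
              · exact hm
            rw [S.E_sig, S.esigFun_y h hy1]
            show S.sigma0 u S.x = S.D.sig (S.sigma0 u h.1)
            rw [hy1, S.sigma0_x, S.sigma0_y hu, spart, if_neg (S.mset_ne_x hum)]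
            rw [S.D.sig_invol]
          · have hnc : h.1 ∉ S.comp := S.not_comp_of_Pset h.2 hx1 hy1
            rw [S.E_sig, S.esigFun_other h hx1 hy1]
            have s1 : S.D.sig h.1 ≠ S.x :=
              fun e => hnc (by rw [← S.D.sig_invol h.1, e]; exact S.sxmem)
            have s3 : S.D.sig h.1 ≠ S.y :=
              fun e => hnc (by rw [← S.D.sig_invol h.1, e]; exact S.symem)
            have s2 : S.D.sig h.1 ≠ u := by
              obtain rfl | hm := id hu
              · exact s1
              · intro e
                apply hvs
                rw [← S.D.sig_invol h.1, e, spart, if_neg (S.mset_ne_x hm)]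
            have s4 : S.D.sig h.1 ≠ S.spart u := by
              obtain rfl | hm := id hu
              · rw [spart, if_pos rfl]; exact s3
              · rw [spart, if_neg (S.mset_ne_x hm)]
                exact fun e => hvu (Diagram.sig_inj e)
            rw [S.sigma0_other s1 s2 s3 s4, S.sigma0_other hx1 hvu hy1 hvs]
  · rfl
  · erw [graftSig_false, keyF_inl, keyF_false]
    show S.sigma0 u u = S.D.sig S.sx
    rw [S.sigma0_u]
    exact (S.D.sig_invol S.x).symm
  · erw [graftSig_true, S.E_sig, S.esig_uE hu, keyF_true, keyF_inl]
    show S.sigma0 u (S.spart u) = S.D.sig S.sy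
    rw [S.sigma0_s hu]
    exact (S.D.sig_invol S.y).symm

lemma key_tau_inl (h : S.E.H) :
    S.keyF u (graftTau S.E ⟨u, S.u_mem_Pset hu⟩ S.X (Sum.inl h))
      = S.D.tau (S.keyF u (Sum.inl h)) := by
  erw [graftTau_inl, keyF_inl, keyF_inl]
  exact S.sigma0_tau hu h.1

lemma key_tau_z (z : S.X.H) (hz : z ≠ S.X.root) :
    S.keyF u (graftTau S.E ⟨u, S.u_mem_Pset hu⟩ S.X (Sum.inr (Sum.inl z)))
      = S.D.tau (S.keyF u (Sum.inr (Sum.inl z))) := by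
  erw [graftTau_nroot _ _ _ hz, keyF_inr_inl, keyF_inr_inl]
  have hzw : z.1 ≠ S.w := fun e => hz (Subtype.ext e)
  show (S.xtauFun z).1 = S.D.tau z.1
  rw [S.xtauFun_other z hzw]

lemma key_color (p) (hfix : graftTau S.E ⟨u, S.u_mem_Pset hu⟩ S.X p = p) :
    S.D.color (S.keyF u p) = graftColor S.E ⟨u, S.u_mem_Pset hu⟩ S.X p := by
  rcases p with h | z | (_ | _)
  · erw [keyF_inl, graftColor_inl]
    show S.D.color (S.sigma0 u h.1) = S.D.color h.1
    exact S.sigma0_color hu h.1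
  · rfl
  · exact absurd hfix (by erw [graftTau_false]; simp)
  · exact absurd hfix (by erw [graftTau_true]; simp)

end KeyFacts

noncomputable def eps : ℝ := if S.D.tau S.sx = S.sy then 1 else -1

section KeyRel

variable (hu : u = S.x ∨ u ∈ S.Mset)
include hu

lemma key_rel :
    fd (graftDiagram S.E ⟨u, S.u_mem_Pset hu⟩ S.X) - S.eps • fd S.D ∈ BhlRel k := by
  classical
  set U : S.E.H := ⟨u, S.u_mem_Pset hu⟩ with hUdef
  set G := graftDiagram S.E U S.X with hGdef
  let e : G.H ≃ S.D.H := Equiv.ofBijective _ (S.keyF_bij hu)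
  have he : ∀ p, e p = S.keyF u p := fun p => rfl
  have hsig : ∀ p, e (G.sig p) = S.D.sig (e p) := fun p => S.key_sig hu p
  have hcolor : ∀ p, G.tau p = p → S.D.color (e p) = G.color p := S.key_color hu
  have htv : G.tau (Sum.inr (Sum.inr false)) = Sum.inr (Sum.inr true) :=
    graftTau_false S.E U S.X
  have htv2 : G.tau (G.tau (Sum.inr (Sum.inr false))) = Sum.inr (Sum.inl S.X.root) := by
    rw [htv]; exact graftTau_true S.E U S.X
  rcases S.horb with ⟨o1, o2, o3⟩ | ⟨o1, o2, o3⟩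
  · have heps : S.eps = 1 := if_pos o1
    rw [heps, one_smul]
    refine iso_mem_BhlRel ⟨e, hsig, ?_, hcolor⟩
    rintro (h | z | (_ | _))
    · exact S.key_tau_inl hu h
    · by_cases hz : z = S.X.root
      · rw [hz]
        show S.keyF u (graftTau S.E U S.X (Sum.inr (Sum.inl S.X.root)))
          = S.D.tau (S.keyF u (Sum.inr (Sum.inl S.X.root)))
        rw [graftTau_root, keyF_false, keyF_inr_inl]
        show S.sx = S.D.tau S.w
        exact o3.symm
      · exact S.key_tau_z hu z hz
    · show S.keyF u (graftTau S.E U S.X (Sum.inr (Sum.inr false)))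
        = S.D.tau (S.keyF u (Sum.inr (Sum.inr false)))
      rw [graftTau_false, keyF_true, keyF_false]
      exact o1.symm
    · show S.keyF u (graftTau S.E U S.X (Sum.inr (Sum.inr true)))
        = S.D.tau (S.keyF u (Sum.inr (Sum.inr true)))
      rw [graftTau_true, keyF_inr_inl, keyF_true]
      show S.w = S.D.tau S.sy
      exact o2.symm
  · have heps : S.eps = -1 := by
      rw [eps, if_neg]
      intro h
      exact S.wnesy (o1.symm.trans h)
    rw [heps]
    have hrw : fd G - (-1 : ℝ) • fd S.D = fd G + fd S.D := by
      rw [neg_smul, one_smul, sub_neg_eq_add]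
    rw [hrw]
    apply as_mem_BhlRel
    refine ⟨G, S.D, e, Sum.inr (Sum.inr false), ?_, hsig, hcolor, ?_, ?_, rfl⟩
    · rw [htv]
      intro hcon
      have hcon2 := Sum.inr.inj hcon
      have hcon3 := Sum.inr.inj hcon2
      cases hcon3
    · intro h hmem
      rw [htv2, htv] at hmem
      rcases hmem with rfl | rfl | rfl
      · erw [htv2, he, he, keyF_false, keyF_inr_inl]
        show S.D.tau S.sx = S.w
        exact o1
      · have h1 : G.tau (Sum.inr (Sum.inr true)) = Sum.inr (Sum.inl S.X.root) :=
          graftTau_true S.E U S.X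
        have h2 : G.tau (Sum.inr (Sum.inl S.X.root)) = Sum.inr (Sum.inr false) :=
          graftTau_root S.E U S.X
        erw [h1, h2, he, he, keyF_true, keyF_false]
        show S.D.tau S.sy = S.sx
        exact o3
      · have h2 : G.tau (Sum.inr (Sum.inl S.X.root)) = Sum.inr (Sum.inr false) :=
          graftTau_root S.E U S.X
        erw [h2, htv, he, he, keyF_inr_inl, keyF_true]
        show S.D.tau S.w = S.sy
        exact o2
    · intro h hmem
      rw [htv2, htv] at hmem
      rcases h with h' | z | (_ | _)
      · exact (S.key_tau_inl hu h').symm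
      · have hz : z ≠ S.X.root := fun e2 => hmem (Or.inr (Or.inr (by rw [e2])))
        exact (S.key_tau_z hu z hz).symm
      · exact absurd (Or.inl rfl) hmem
      · exact absurd (Or.inr (Or.inl rfl)) hmem

end KeyRel




/-! ### Grafting at any other `i`-leg gives a boring diagram -/

lemma compSet_disj {u b : S.D.H} (hnc : u ∉ S.comp) (hb : b ∈ S.D.compSet u) :
    b ∉ S.comp := by
  intro hc
  exact hnc (Diagram.mem_comp_of_reach hc (Diagram.reach_symm hb))

lemma graft_boring {u : S.D.H} (hnc : u ∉ S.comp) (hufx : S.D.tau u = u)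
    (hcolu : S.D.color u = S.i) (hnm : u ∉ S.Mset) :
    (graftDiagram S.E ⟨u, Or.inl hnc⟩ S.X).HasBoring := by
  classical
  set U : S.E.H := ⟨u, Or.inl hnc⟩ with hU
  set G := graftDiagram S.E U S.X with hG
  have hnb : ∀ h, ¬ S.D.IsBoringAt h := fun h hh => S.hnb ⟨h, hh⟩
  have h1 := hnb u
  rw [Diagram.IsBoringAt] at h1
  push_neg at h1
  obtain ⟨hnd, htu⟩ := h1
  by_cases hEx : ∃ z ∈ S.D.univIn u, S.D.color z ≠ S.i ∧ S.D.color z ≠ S.j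
  · obtain ⟨z, ⟨hzr, hzf⟩, hzi, hzj⟩ := hEx
    obtain ⟨zc, ⟨⟨hzcr, hzcf⟩, hzcc⟩, -⟩ := S.hcol (S.D.color z)
    have hzcX : zc ∈ S.Xset := by
      refine ⟨hzcr, ?_, ?_, ?_, ?_⟩
      · intro e; apply hzi; rw [← hzcc, e]; exact S.hxc
      · intro e; apply S.sxnonfix; rw [← e]; exact hzcf
      · intro e; apply hzj; rw [← hzcc, e]; exact S.hyc
      · intro e; apply S.synonfix; rw [← e]; exact hzcf
    obtain ⟨hzb, hpathE⟩ := S.reach_lift_compl hnc hzr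
    have r1 : GReach S.E U S.X (Sum.inl U) (Sum.inl ⟨z, Or.inl hzb⟩) :=
      lift_reach_E S.E U S.X hpathE
    have r2 : GReach S.E U S.X (Sum.inl U) (Sum.inr (Sum.inl ⟨zc, hzcX⟩)) := by
      refine Relation.ReflTransGen.head (b := Sum.inr (Sum.inr false))
        (Or.inl (graftSig_inl_u S.E U S.X).symm) ?_
      refine Relation.ReflTransGen.head (b := Sum.inr (Sum.inr true)) (Or.inr rfl) ?_
      refine Relation.ReflTransGen.head (b := Sum.inr (Sum.inl S.X.root)) (Or.inr rfl) ?_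
      exact lift_reach_X S.E U S.X
    have fix1 : G.tau (Sum.inl ⟨z, Or.inl hzb⟩) = Sum.inl ⟨z, Or.inl hzb⟩ := by
      show graftTau S.E U S.X (Sum.inl ⟨z, Or.inl hzb⟩) = Sum.inl ⟨z, Or.inl hzb⟩
      erw [graftTau_inl]
      exact congrArg Sum.inl (Subtype.ext hzf)
    have fix2 : G.tau (Sum.inr (Sum.inl ⟨zc, hzcX⟩)) = Sum.inr (Sum.inl ⟨zc, hzcX⟩) := by
      show graftTau S.E U S.X (Sum.inr (Sum.inl ⟨zc, hzcX⟩)) = Sum.inr (Sum.inl ⟨zc, hzcX⟩)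
      have hzcw : zc ≠ S.w := fun e => S.wnonfix (by rw [← e]; exact hzcf)
      erw [graftTau_nroot S.E U S.X (z := ⟨zc, hzcX⟩) (fun e => hzcw (congrArg Subtype.val e))]
      refine congrArg (fun t => Sum.inr (Sum.inl t)) ?_
      erw [S.X_tau, S.xtauFun_other ⟨zc, hzcX⟩ hzcw]
      exact Subtype.ext hzcf
    refine ⟨Sum.inl U, Or.inl ⟨Sum.inl ⟨z, Or.inl hzb⟩, ⟨r1, fix1⟩,
      Sum.inr (Sum.inl ⟨zc, hzcX⟩), ⟨r2, fix2⟩, ?_, ?_⟩⟩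
    · exact Sum.inl_ne_inr
    · show graftColor S.E U S.X (Sum.inl ⟨z, Or.inl hzb⟩)
        = graftColor S.E U S.X (Sum.inr (Sum.inl ⟨zc, hzcX⟩))
      erw [graftColor_inl, graftColor_inr_inl]
      exact hzcc.symm
  · push_neg at hEx
    exfalso
    apply hnm
    have humem : u ∈ S.D.univIn u := ⟨Relation.ReflTransGen.refl, hufx⟩
    have hsub : ({u, S.D.sig u} : Set S.D.H) ⊆ S.D.compSet u := by
      intro a ha
      rcases ha with rfl | ha
      · exact Relation.ReflTransGen.refl
      · rw [Set.mem_singleton_iff] at ha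
        rw [ha]
        exact Diagram.reach_sig u
    have hpair : ({u, S.D.sig u} : Set S.D.H).ncard = 2 :=
      Set.ncard_pair (Ne.symm (S.D.sig_ne u))
    have hinj : Set.InjOn S.D.color (S.D.univIn u) := by
      intro a ha b hb hab
      by_contra hne
      exact hnd a ha b hb hne hab
    have himg : S.D.color '' (S.D.univIn u) ⊆ {S.i, S.j} := by
      rintro c ⟨z, hz, rfl⟩
      by_cases hci : S.D.color z = S.i
      · exact Or.inl hci
      · exact Or.inr (hEx z hz hci)
    have hle2 : (S.D.univIn u).ncard ≤ 2 := by
      rw [← Set.ncard_image_of_injOn hinj]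
      refine le_trans (Set.ncard_le_ncard himg (Set.toFinite _)) ?_
      refine le_trans (Set.ncard_insert_le _ _) ?_
      rw [Set.ncard_singleton]
    have hge : 2 ≤ (S.D.compSet u).ncard := by
      rw [← hpair]
      exact Set.ncard_le_ncard hsub (Set.toFinite _)
    rw [Diagram.IsTreeAt] at htu
    have hc2 : (S.D.compSet u).ncard = 2 := by omega
    have hEq : ({u, S.D.sig u} : Set S.D.H) = S.D.compSet u :=
      Set.eq_of_subset_of_ncard_le hsub (by omega) (Set.toFinite _)
    obtain ⟨z, hz, hzne⟩ := Set.exists_ne_of_one_lt_ncard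
      (s := S.D.univIn u) (by omega) u
    have hzc : z ∈ S.D.compSet u := hz.1
    rw [← hEq] at hzc
    rcases Set.mem_insert_iff.mp hzc with e | e
    · exact absurd e hzne
    · rw [Set.mem_singleton_iff] at e
      have hzfix : S.D.tau (S.D.sig u) = S.D.sig u := by rw [← e]; exact hz.2
      have hcolz : S.D.color z ≠ S.i := by
        intro hci
        apply hnd z hz u humem hzne
        rw [hci, hcolu]
      have hcolj : S.D.color (S.D.sig u) = S.j := by
        rw [← e]
        exact hEx z hz hcolz
      exact ⟨hufx, hzfix, hcolu, hcolj⟩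

end Setup
/-- Let `k ≥ 3` and let `D` be a unitrivalent diagram on `k` colors
having a component `C` (the component of `h0`) of degree `k - 1`, i.e. a tree with
exactly one univalent vertex of each of the `k` colors.  Suppose the univalent vertices
`x, y` of `C` colored `i` resp. `j` are both adjacent to a common trivalent vertex of
`C` (the `tau`-orbit of `D.sig x`).  Then `(1 + m(D;i,j)) • [D] = 0` in `B^{hl}(k)`. -/
theorem finite_type_link_homotopy_stmt1 (k : ℕ) (hk : 3 ≤ k) (D : Diagram k) (h0 : D.H)
    (htree : D.IsTreeAt h0)
    (hcol : ∀ c : Fin k, ∃! x : D.H, x ∈ D.univIn h0 ∧ D.color x = c)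
    (i j : Fin k) (hij : i ≠ j)
    (x y : D.H) (hx : x ∈ D.univIn h0) (hy : y ∈ D.univIn h0)
    (hxc : D.color x = i) (hyc : D.color y = j)
    (htriv : D.tau (D.sig x) ≠ D.sig x)
    (hadj : D.sig y = D.tau (D.sig x) ∨ D.sig y = D.tau (D.tau (D.sig x))) :
    (1 + (D.m i j : ℝ)) • bhlClass D = 0 := by
  classical
  by_cases hb : D.HasBoring
  · have hmem : fd D ∈ BhlRel k := boring_mem_BhlRel hb
    have hz : bhlClass D = 0 := (Submodule.Quotient.mk_eq_zero _).mpr hmem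
    rw [hz, smul_zero]
  · set S : Setup k := ⟨D, h0, x, y, i, j, hk, htree, hcol, hij, hx, hy, hxc, hyc,
      htriv, hadj, hb⟩ with hS
    have hlink : (∑ u ∈ Finset.univ.filter (fun u => S.E.tau u = u ∧ S.E.color u = S.i),
        fd (graftDiagram S.E u S.X)) ∈ BhlRel k :=
      link_mem_BhlRel ⟨S.E, S.i, S.X, fun u => graftDiagram S.E u S.X,
        fun u _ _ => isGraft_graftDiagram S.E u S.X, rfl⟩
    set T := Finset.univ.filter (fun u => S.E.tau u = u ∧ S.E.color u = S.i) with hT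
    set Q : S.E.H → Prop := fun u => u.1 = S.x ∨ u.1 ∈ S.Mset with hQ
    set N := T.filter Q with hN
    have hsplit : (∑ u ∈ T, fd (graftDiagram S.E u S.X))
        = (∑ u ∈ N, fd (graftDiagram S.E u S.X))
          + ∑ u ∈ T.filter (fun u => ¬ Q u), fd (graftDiagram S.E u S.X) :=
      (Finset.sum_filter_add_sum_filter_not T Q _).symm
    have hkey : ∀ u ∈ N, fd (graftDiagram S.E u S.X) - S.eps • fd S.D ∈ BhlRel k := by
      intro u hu
      have hQu : Q u := (Finset.mem_filter.mp hu).2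
      exact S.key_rel hQu
    have hbor : ∀ u ∈ T.filter (fun u => ¬ Q u), fd (graftDiagram S.E u S.X) ∈ BhlRel k := by
      intro u hu
      obtain ⟨huT, hnQ⟩ := Finset.mem_filter.mp hu
      obtain ⟨-, hfixE, hcolE⟩ := Finset.mem_filter.mp huT
      have hx1 : u.1 ≠ S.x := fun e => hnQ (Or.inl e)
      have hy1 : u.1 ≠ S.y := by
        intro e
        have hcc : S.D.color u.1 = S.i := hcolE
        rw [e, S.hyc] at hcc
        exact S.hij hcc.symm
      have hnc : u.1 ∉ S.comp := S.not_comp_of_Pset u.2 hx1 hy1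
      have hfixD : S.D.tau u.1 = u.1 := congrArg Subtype.val hfixE
      have hcolD : S.D.color u.1 = S.i := hcolE
      have hnm : u.1 ∉ S.Mset := fun hm => hnQ (Or.inr hm)
      exact boring_mem_BhlRel (S.graft_boring hnc hfixD hcolD hnm)
    have hsum1 : (∑ u ∈ N, fd (graftDiagram S.E u S.X))
        - (N.card : ℝ) • (S.eps • fd S.D) ∈ BhlRel k := by
      have hmm := Submodule.sum_mem (BhlRel k) hkey
      rw [Finset.sum_sub_distrib, Finset.sum_const] at hmm
      rwa [Nat.cast_smul_eq_nsmul]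
    have hrest : (∑ u ∈ T.filter (fun u => ¬ Q u), fd (graftDiagram S.E u S.X)) ∈ BhlRel k :=
      Submodule.sum_mem (BhlRel k) hbor
    have hmain : (N.card : ℝ) • (S.eps • fd S.D) ∈ BhlRel k := by
      have h3 := hlink
      rw [hsplit] at h3
      have hab : (N.card : ℝ) • (S.eps • fd S.D)
          = ((∑ u ∈ N, fd (graftDiagram S.E u S.X))
              + ∑ u ∈ T.filter (fun u => ¬ Q u), fd (graftDiagram S.E u S.X))
            - ((∑ u ∈ N, fd (graftDiagram S.E u S.X))
              - (N.card : ℝ) • (S.eps • fd S.D))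
            - ∑ u ∈ T.filter (fun u => ¬ Q u), fd (graftDiagram S.E u S.X) := by
        abel
      rw [hab]
      exact sub_mem (sub_mem h3 hsum1) hrest
    have hcard : N.card = 1 + D.m i j := by
      have hNeq : N = insert (α := S.E.H) (⟨S.x, S.x_mem_Pset⟩ : S.E.H)
          (Finset.univ.filter (fun u : S.E.H => u.1 ∈ S.Mset)) := by
        ext u
        simp only [hN, hT, Finset.mem_filter, Finset.mem_univ, true_and]
        erw [Finset.mem_insert]
        simp only [Finset.mem_filter, Finset.mem_univ, true_and]
        constructor
        · rintro ⟨⟨hfix, hcol⟩, hQu⟩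
          rcases hQu with e | hm
          · exact Or.inl (Subtype.ext e)
          · exact Or.inr hm
        · rintro (rfl | hm)
          · exact ⟨⟨Subtype.ext S.xfix, S.hxc⟩, Or.inl rfl⟩
          · exact ⟨⟨Subtype.ext hm.1, hm.2.2.1⟩, Or.inr hm⟩
      have hXnot : (⟨S.x, S.x_mem_Pset⟩ : S.E.H)
          ∉ Finset.univ.filter (fun u : S.E.H => u.1 ∈ S.Mset) := by
        intro hmem
        exact S.mset_not_comp (Finset.mem_filter.mp hmem).2 S.xmem
      erw [hNeq, Finset.card_insert_of_notMem hXnot]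
      have himg : (Finset.univ.filter (fun u : S.E.H => u.1 ∈ S.Mset)).image Subtype.val
          = S.Mset.toFinset := by
        ext z
        erw [Finset.mem_image]
        simp only [Finset.mem_filter, Finset.mem_univ, true_and,
          Set.mem_toFinset]
        constructor
        · rintro ⟨u, hm, rfl⟩
          exact (Finset.mem_filter.mp hm).2
        · intro hz
          exact ⟨⟨z, Or.inl (S.mset_not_comp hz)⟩, Finset.mem_filter.mpr ⟨@Finset.mem_univ _ S.E.fin _, hz⟩, rfl⟩
      have hci := Finset.card_image_of_injective
        (Finset.univ.filter (fun u : S.E.H => u.1 ∈ S.Mset)) Subtype.val_injective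
      erw [himg] at hci
      have hMc : (Finset.univ.filter (fun u : S.E.H => u.1 ∈ S.Mset)).card = D.m i j := by
        rw [← hci]
        exact (Set.ncard_eq_toFinset_card' S.Mset).symm
      erw [hMc]
      omega
    have heps2 : S.eps * S.eps = 1 := by
      rw [Setup.eps]
      split_ifs <;> norm_num
    have hfinal : ((1 : ℝ) + (D.m i j : ℝ)) • fd D ∈ BhlRel k := by
      have h6 := Submodule.smul_mem (BhlRel k) S.eps hmain
      rw [smul_smul, smul_smul, show S.eps * (N.card : ℝ) * S.eps
        = (N.card : ℝ) * (S.eps * S.eps) by ring, heps2, mul_one] at h6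
      rw [hcard] at h6
      have hc : ((1 + D.m i j : ℕ) : ℝ) = (1 : ℝ) + (D.m i j : ℝ) := by push_cast; ring
      rwa [hc] at h6
    show (1 + (D.m i j : ℝ)) • bhlClass D = 0
    rw [bhlClass, ← Submodule.Quotient.mk_smul]
    exact (Submodule.Quotient.mk_eq_zero _).mpr hfinal
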